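/- Assume the standing assumptions. Then every λ ∈ σ(U) satisfies Im λ = 0 or |λ|² = −a·b; that is, the spectrum of U is contained in the union of the real axis and the circle of radius √(−ab) centered at the origin (the circle part being empty when a·b > 0). -/

import Mathlib

open ContinuousLinearMap

/-- If commuting elements have a unit product, the right factor is a unit. -/
private lemma isUnit_right_of_commute_aux {M : Type*} [Monoid M] {x y : M}
    (h : x * y = y * x) (hu : IsUnit (x * y)) : IsUnit y :=
  ((Commute.isUnit_mul_iff h).mp hu).2

/-- Under the standing assumptions, every `λ ∈ σ(U)` satisfies
`Im λ = 0` or `|λ|² = −ab`; i.e. `σ(U)` is contained in the union of the real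
axis and the circle of radius `√(−ab)` about the origin. -/
theorem stmt_19 {H K : Type*}
    [NormedAddCommGroup H] [InnerProductSpace ℂ H] [CompleteSpace H] [Nontrivial H]
    [NormedAddCommGroup K] [InnerProductSpace ℂ K] [CompleteSpace K] [Nontrivial K]
    (a b : ℝ)
    (d : H →L[ℂ] K) (hd : d ∘L (adjoint d) = 1)
    (S : H →L[ℂ] H) (hS : IsSelfAdjoint S) (hS2 : S ∘L S = 1)
    (C : H →L[ℂ] H)
    (hC : C = (a : ℂ) • ((adjoint d) ∘L d) + (b : ℂ) • (1 - (adjoint d) ∘L d))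
    (U : H →L[ℂ] H) (hU : U = S ∘L C)
    (h1 : (adjoint d) ∘L d ≠ 1) (h2 : S ≠ 1) (h3 : S ≠ -1)
    (h4 : a ≠ b) (h5 : a ≠ -b) (h6 : a * b ≠ 0) :
    ∀ lam ∈ spectrum ℂ U, lam.im = 0 ∨ ‖lam‖ ^ 2 = -(a * b) := by
  intro lam hlam
  set p : H →L[ℂ] H := adjoint d ∘L d with hp
  have hdd : ∀ y : K, d (adjoint d y) = y := by
    intro y
    have := DFunLike.congr_fun hd y
    simpa using this
  have hpp : p * p = p := by
    ext x
    simp [hp, ContinuousLinearMap.mul_apply, hdd]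
  have hps : star p = p := by
    rw [star_eq_adjoint, hp, adjoint_comp, adjoint_adjoint]
  have hCsa : star C = C := by
    rw [hC]
    simp only [star_add, star_smul, star_sub, star_one, hps, Complex.star_def,
      Complex.conj_ofReal]
  have hSs : star S = S := hS.star_eq
  have hS2' : S * S = 1 := hS2
  have hU' : U = S * C := hU
  have hCform : C = ((a : ℂ) - b) • p + (b : ℂ) • 1 := by
    rw [hC]; module
  have hC2 : C * C = ((a : ℂ) + b) • C - ((a : ℂ) * b) • 1 := by
    rw [hCform]
    simp only [add_mul, mul_add, smul_mul_assoc, mul_smul_comm, hpp, mul_one, one_mul,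
      smul_add, smul_smul]
    module
  have hab : ((a : ℂ) * b) ≠ 0 := by
    simpa using h6
  set X : H →L[ℂ] H := ((a : ℂ) + b) • 1 - C with hX
  have hCX : C * X = ((a : ℂ) * b) • 1 := by
    rw [hX, mul_sub, mul_smul_comm, mul_one, hC2]
    abel
  have hXC : X * C = ((a : ℂ) * b) • 1 := by
    rw [hX, sub_mul, smul_mul_assoc, one_mul, hC2]
    abel
  set V : H →L[ℂ] H := (((a : ℂ) * b)⁻¹ • X) * S with hV
  have hUV : U * V = 1 := by
    rw [hU', hV]
    calc S * C * (((a : ℂ) * b)⁻¹ • X * S)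
        = ((a : ℂ) * b)⁻¹ • (S * (C * X) * S) := by
          simp only [smul_mul_assoc, mul_smul_comm, mul_assoc]
      _ = 1 := by
          rw [hCX, mul_smul_comm, mul_one, smul_mul_assoc, smul_smul,
            inv_mul_cancel₀ hab, one_smul, hS2']
  have hVU : V * U = 1 := by
    rw [hU', hV]
    calc ((a : ℂ) * b)⁻¹ • X * S * (S * C)
        = ((a : ℂ) * b)⁻¹ • (X * (S * S) * C) := by
          simp only [smul_mul_assoc, mul_assoc]
      _ = 1 := by
          rw [hS2', mul_one, hXC, smul_smul, inv_mul_cancel₀ hab, one_smul]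
  have hUunit : IsUnit U := ⟨⟨U, V, hUV, hVU⟩, rfl⟩
  have habV : ((a : ℂ) * b) • V = ((a : ℂ) + b) • S - C * S := by
    rw [hV, smul_mul_assoc, smul_smul, mul_inv_cancel₀ hab, one_smul, hX, sub_mul,
      smul_mul_assoc, one_mul]
  set W : H →L[ℂ] H := S * C + C * S - ((a : ℂ) + b) • S with hW
  have hWU : W = U - ((a : ℂ) * b) • V := by
    rw [hW, hU', habV]
    abel
  have hWsa : IsSelfAdjoint W := by
    show star W = W
    rw [hW]
    simp only [star_sub, star_add, star_mul, star_smul, hCsa, hSs, Complex.star_def,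
      map_add, Complex.conj_ofReal]
    abel
  have hlam0 : lam ≠ 0 := by
    rintro rfl
    exact (spectrum.zero_mem_iff ℂ).mp hlam hUunit
  set mu : ℂ := lam - ((a : ℂ) * b) / lam with hmu
  have hcomm : V * U = U * V := by rw [hVU, hUV]
  have hmuW : mu ∈ spectrum ℂ W := by
    rw [spectrum.mem_iff]
    intro hz
    apply spectrum.mem_iff.mp hlam
    set x : H →L[ℂ] H := 1 + (((a : ℂ) * b) / lam) • V with hx
    set y : H →L[ℂ] H := algebraMap ℂ (H →L[ℂ] H) lam - U with hy
    have hfac : algebraMap ℂ (H →L[ℂ] H) mu - W = x * y := by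
      rw [hx, hy, hWU]
      simp only [Algebra.algebraMap_eq_smul_one, add_mul, one_mul, smul_mul_assoc,
        mul_sub, mul_smul_comm, mul_one, hVU, smul_smul, smul_sub, hmu, sub_smul]
      match_scalars <;> field_simp
    have hVy : V * y = y * V := by
      rw [hy]
      simp only [mul_sub, sub_mul, mul_smul_comm, smul_mul_assoc,
        Algebra.algebraMap_eq_smul_one, mul_one, one_mul, hcomm]
    have hxy : x * y = y * x := by
      rw [hx, add_mul, mul_add, one_mul, mul_one, smul_mul_assoc, mul_smul_comm, hVy]
    have : IsUnit (x * y) := by rw [← hfac]; exact hz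
    exact isUnit_right_of_commute_aux hxy this
  have hmure : mu = (mu.re : ℂ) := hWsa.mem_spectrum_eq_re hmuW
  have hmuim : mu.im = 0 := by rw [hmure]; simp
  -- now pure complex-number arithmetic
  have habl : ((a : ℂ) * b) / lam = ((a * b : ℝ) : ℂ) * lam⁻¹ := by
    push_cast; ring
  have him : lam.im - (a * b) * (-lam.im / Complex.normSq lam) = 0 := by
    have := hmuim
    rw [hmu] at this
    rw [Complex.sub_im, habl] at this
    simp only [Complex.mul_im, Complex.ofReal_re, Complex.ofReal_im, Complex.inv_im,
      zero_mul, add_zero] at this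
    exact this
  by_cases hli : lam.im = 0
  · exact Or.inl hli
  · right
    have hns : Complex.normSq lam ≠ 0 := by
      simpa [Complex.normSq_eq_zero] using hlam0
    have key : lam.im * (Complex.normSq lam + a * b) = 0 := by
      field_simp at him
      nlinarith [him]
    have := (mul_eq_zero.mp key).resolve_left hli
    rw [Complex.sq_norm]
    linarith
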